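/- Let w ∈ S_n and suppose the poset M_w is self-dual, i.e., there exists a bijection φ : M_w → M_w such that for all z, z' ∈ M_w, z ≤ z' (in the product order) if and only if φ(z') ≤ φ(z). Then the weak order interval Λ_w is rank-symmetric: for every k, |{v ∈ S_n : v ≤_L w, ℓ(v) = k}| = |{v ∈ S_n : v ≤_L w, ℓ(v) = ℓ(w) − k}|. -/
import Mathlib


/-- The inversion set of `w`: pairs of positions `(i,j)` with `i < j` and `w i > w j`. -/
def Invs {n : ℕ} (w : Equiv.Perm (Fin n)) : Finset (Fin n × Fin n) :=
  Finset.univ.filter (fun p => p.1 < p.2 ∧ w p.2 < w p.1)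

/-- The length (number of inversions) of `w`. -/
def len {n : ℕ} (w : Equiv.Perm (Fin n)) : ℕ := (Invs w).card

/-- The `i`-th entry of the Lehmer code of `w`. -/
def lehmer {n : ℕ} (w : Equiv.Perm (Fin n)) (i : Fin n) : ℕ :=
  ((Invs w).filter (fun p => p.1 = i)).card

/-- The extended Lehmer code `m_{i,j}(w)`: the number of inversions `(i,k)` with `k < j`. -/
def mext {n : ℕ} (w : Equiv.Perm (Fin n)) (i : Fin n) (j : Fin (n + 1)) : ℕ :=
  ((Invs w).filter (fun p => p.1 = i ∧ (p.2 : ℕ) < (j : ℕ))).card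

/-- The left weak order: `v ≤_L w` iff `inv(v) ⊆ inv(w)`. -/
def leftWeak {n : ℕ} (v w : Equiv.Perm (Fin n)) : Prop := Invs v ⊆ Invs w

/-- The value of `w` extended to `Fin (n+1)` by fixing the last point
(the `1`-indexed convention `w(n+1) = n+1` becomes `wval w n = n` here). -/
def wval {n : ℕ} (w : Equiv.Perm (Fin n)) (j : Fin (n + 1)) : ℕ :=
  if h : (j : ℕ) < n then (w ⟨j, h⟩ : ℕ) else n

/-- The set of non-inversions of `w`: pairs `(i,j)` with `i ≤ j ≤ n+1` and `w i ≤ w j`,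
where `w` is extended by fixing the last point. -/
def Ninvs {n : ℕ} (w : Equiv.Perm (Fin n)) : Finset (Fin n × Fin (n + 1)) :=
  Finset.univ.filter (fun p => (p.1 : ℕ) ≤ (p.2 : ℕ) ∧ (w p.1 : ℕ) ≤ wval w p.2)

/-- The set of Lehmer codes of elements of the weak order interval `Λ_w = [id, w]`. -/
def codeSet {n : ℕ} (w : Equiv.Perm (Fin n)) : Set (Fin n → ℕ) :=
  {x | ∃ v : Equiv.Perm (Fin n), leftWeak v w ∧ lehmer v = x}

/-- The tuple `b_{i,x}(w)`: the `j`-th coordinate is `0` if `j < i` or `(i,j) ∈ inv(w)`,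
and is `max {0, x - m_{i,j}(w)}` (truncated subtraction) if `j ≥ i` and `(i,j) ∈ ninv(w)`. -/
def bmin {n : ℕ} (w : Equiv.Perm (Fin n)) (i : Fin n) (x : ℕ) : Fin n → ℕ :=
  fun j => if (i : ℕ) ≤ (j : ℕ) ∧ (w i : ℕ) ≤ (w j : ℕ) then x - mext w i j.castSucc else 0

/-- The set `M_w` of all `b_{i,x}(w)` for `1 ≤ x ≤ c_i(w)`. -/
def Mset {n : ℕ} (w : Equiv.Perm (Fin n)) : Set (Fin n → ℕ) :=
  {z | ∃ (i : Fin n) (x : ℕ), 1 ≤ x ∧ x ≤ lehmer w i ∧ z = bmin w i x}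

/-- The direct sum `v × w ∈ S_{m+n}` of permutations. -/
def dsum {m n : ℕ} (v : Equiv.Perm (Fin m)) (w : Equiv.Perm (Fin n)) :
    Equiv.Perm (Fin (m + n)) :=
  finSumFinEquiv.permCongr (Equiv.sumCongr v w)

section RankSymmetryProof

open Finset

variable {n : ℕ}

lemma mem_Invs {v : Equiv.Perm (Fin n)} {p : Fin n × Fin n} :
    p ∈ Invs v ↔ p.1 < p.2 ∧ v p.2 < v p.1 := by
  simp [Invs]

lemma lehmer_eq (v : Equiv.Perm (Fin n)) (i : Fin n) :
    lehmer v i = (univ.filter fun k => i < k ∧ v k < v i).card := by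
  classical
  rw [lehmer]
  apply Finset.card_bij (fun p _ => p.2)
  · rintro ⟨a, b⟩ hp
    simp only [mem_filter, mem_Invs] at hp
    obtain ⟨⟨h1, h2⟩, rfl⟩ := hp
    simp [h1, h2]
  · rintro ⟨a, b⟩ ha ⟨c, d⟩ hc h
    simp only [mem_filter, mem_Invs] at ha hc
    simp_all [Prod.ext_iff]
  · intro k hk
    simp only [mem_filter, mem_univ, true_and] at hk
    exact ⟨(i, k), by simp [mem_filter, mem_Invs, hk.1, hk.2], rfl⟩

lemma mext_eq (v : Equiv.Perm (Fin n)) (i : Fin n) (j : Fin (n + 1)) :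
    mext v i j = (univ.filter fun k => i < k ∧ v k < v i ∧ (k : ℕ) < (j : ℕ)).card := by
  classical
  rw [mext]
  apply Finset.card_bij (fun p _ => p.2)
  · rintro ⟨a, b⟩ hp
    simp only [mem_filter, mem_Invs] at hp
    obtain ⟨⟨h1, h2⟩, rfl, h3⟩ := hp
    simp [h1, h2, h3]
  · rintro ⟨a, b⟩ ha ⟨c, d⟩ hc h
    simp only [mem_filter, mem_Invs] at ha hc
    simp_all [Prod.ext_iff]
  · intro k hk
    simp only [mem_filter, mem_univ, true_and] at hk
    exact ⟨(i, k), by simp [mem_filter, mem_Invs, hk.1, hk.2.1, hk.2.2], rfl⟩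

lemma len_eq_sum (v : Equiv.Perm (Fin n)) : len v = ∑ i, lehmer v i := by
  classical
  rw [len]
  exact Finset.card_eq_sum_card_fiberwise (fun p _ => mem_univ p.1)

lemma perm_filter_card (σ : Equiv.Perm (Fin n)) (P : Fin n → Prop) [DecidablePred P] :
    (univ.filter fun t => P (σ t)).card = (univ.filter P).card := by
  apply Finset.card_bij (fun t _ => σ t)
  · intro t ht; simp only [mem_filter, mem_univ, true_and] at ht ⊢; exact ht
  · intro a _ b _ h; exact σ.injective h
  · intro b hb
    simp only [mem_filter, mem_univ, true_and] at hb
    exact ⟨σ.symm b, by simpa using hb, by simp⟩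

lemma card_filter_val (P : ℕ → Prop) [DecidablePred P] :
    ((univ : Finset (Fin n)).filter fun k : Fin n => P (k : ℕ)).card
      = ((Finset.range n).filter P).card := by
  apply Finset.card_bij (fun (k : Fin n) _ => (k : ℕ))
  · intro k hk; simp only [mem_filter, mem_univ, true_and] at hk
    simp [hk, k.isLt]
  · intro a _ b _ h; exact Fin.ext h
  · intro m hm
    simp only [mem_filter, Finset.mem_range] at hm
    exact ⟨⟨m, hm.1⟩, by simp [hm.2], rfl⟩

lemma card_val_Ioo (a b : ℕ) (hb : b ≤ n) :
    ((univ : Finset (Fin n)).filter fun k : Fin n => a < (k : ℕ) ∧ (k : ℕ) < b).card = b - a - 1 := by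
  rw [card_filter_val (fun m => a < m ∧ m < b)]
  have : (Finset.range n).filter (fun m => a < m ∧ m < b) = Finset.Ioo a b := by
    ext m; simp [Finset.mem_Ioo]; omega
  rw [this, Nat.card_Ioo]

lemma card_val_gt (a : ℕ) :
    ((univ : Finset (Fin n)).filter fun k : Fin n => a < (k : ℕ)).card = n - a - 1 := by
  have : ((univ : Finset (Fin n)).filter fun k : Fin n => a < (k : ℕ))
      = (univ : Finset (Fin n)).filter fun k : Fin n => a < (k : ℕ) ∧ (k : ℕ) < n := by
    ext k; simp [k.isLt]
  rw [this, card_val_Ioo a n le_rfl]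

lemma lehmer_add_lt (v : Equiv.Perm (Fin n)) (i : Fin n) :
    lehmer v i + (i : ℕ) + 1 ≤ n := by
  have h1 : lehmer v i ≤ n - (i : ℕ) - 1 := by
    rw [lehmer_eq]
    calc (univ.filter fun k => i < k ∧ v k < v i).card
        ≤ ((univ : Finset (Fin n)).filter fun k : Fin n => (i : ℕ) < (k : ℕ)).card := by
          apply Finset.card_le_card
          intro k hk
          simp only [mem_filter, mem_univ, true_and] at hk ⊢
          exact hk.1
      _ = n - (i : ℕ) - 1 := card_val_gt _
  have := i.isLt
  omega

lemma lehmer_le_of_leftWeak {v w : Equiv.Perm (Fin n)} (h : leftWeak v w) (i : Fin n) :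
    lehmer v i ≤ lehmer w i :=
  Finset.card_le_card (Finset.filter_subset_filter _ h)

lemma mext_le_of_leftWeak {v w : Equiv.Perm (Fin n)} (h : leftWeak v w) (i : Fin n)
    (j : Fin (n + 1)) : mext v i j ≤ mext w i j :=
  Finset.card_le_card (Finset.filter_subset_filter _ h)

lemma mext_self (v : Equiv.Perm (Fin n)) (i : Fin n) : mext v i i.castSucc = 0 := by
  rw [mext_eq, Finset.card_eq_zero]
  ext k
  simp only [mem_filter, mem_univ, true_and, Finset.notMem_empty, iff_false, not_and,
    Fin.coe_castSucc, Fin.lt_def]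
  intro h1 _
  omega

lemma vle_of_wle {v w : Equiv.Perm (Fin n)} (h : leftWeak v w) {i j : Fin n}
    (hij : i < j) (hw : w i ≤ w j) : v i ≤ v j := by
  by_contra hv
  push_neg at hv
  have : (i, j) ∈ Invs v := mem_Invs.2 ⟨hij, hv⟩
  have := mem_Invs.1 (h this)
  exact absurd this.2 (not_lt.2 hw)

lemma lehmer_split {v : Equiv.Perm (Fin n)} {i j : Fin n} (hij : i ≤ j) (hv : v i ≤ v j) :
    lehmer v i ≤ mext v i j.castSucc + lehmer v j := by
  rcases eq_or_lt_of_le hij with rfl | hij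
  · simp [mext_self]
  rw [lehmer_eq, mext_eq, lehmer_eq]
  refine le_trans (Finset.card_le_card ?_) (Finset.card_union_le _ _)
  intro k hk
  simp only [mem_filter, mem_univ, true_and, Finset.mem_union, Fin.coe_castSucc] at hk ⊢
  obtain ⟨h1, h2⟩ := hk
  rcases lt_or_ge (k : ℕ) (j : ℕ) with h3 | h3
  · exact Or.inl ⟨h1, h2, h3⟩
  · have hkj : k ≠ j := by
      rintro rfl
      exact absurd (lt_of_lt_of_le h2 hv) (lt_irrefl _)
    have : j < k := by
      rw [Fin.lt_def]
      rcases lt_or_eq_of_le h3 with h | h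
      · exact h
      · exact absurd (Fin.ext h.symm) hkj
    exact Or.inr ⟨this, lt_of_lt_of_le h2 hv⟩

lemma mext_triangle {v : Equiv.Perm (Fin n)} {i j : Fin n} (hij : i ≤ j) (hv : v i ≤ v j)
    (K : Fin (n + 1)) : mext v i K ≤ mext v i j.castSucc + mext v j K := by
  rw [mext_eq, mext_eq, mext_eq]
  refine le_trans (Finset.card_le_card ?_) (Finset.card_union_le _ _)
  intro k hk
  simp only [mem_filter, mem_univ, true_and, Finset.mem_union, Fin.coe_castSucc] at hk ⊢
  obtain ⟨h1, h2, h3⟩ := hk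
  rcases lt_or_ge (k : ℕ) (j : ℕ) with h4 | h4
  · exact Or.inl ⟨h1, h2, h4⟩
  · have hkj : k ≠ j := by
      rintro rfl
      exact absurd (lt_of_lt_of_le h2 hv) (lt_irrefl _)
    have hjk : j < k := by
      rw [Fin.lt_def]
      rcases lt_or_eq_of_le h4 with h | h
      · exact h
      · exact absurd (Fin.ext h.symm) hkj
    exact Or.inr ⟨hjk, lt_of_lt_of_le h2 hv, h3⟩

/-- The inequalities characterizing Lehmer codes of elements of `Λ_w`. -/
def Good {n : ℕ} (w : Equiv.Perm (Fin n)) (c : Fin n → ℕ) : Prop :=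
  (∀ i, c i ≤ lehmer w i) ∧
    ∀ i j : Fin n, i ≤ j → w i ≤ w j → c i ≤ c j + mext w i j.castSucc

lemma code_good {v w : Equiv.Perm (Fin n)} (h : leftWeak v w) : Good w (lehmer v) := by
  constructor
  · exact lehmer_le_of_leftWeak h
  · intro i j hij hw
    rcases eq_or_lt_of_le hij with rfl | hij'
    · omega
    have hv : v i ≤ v j := vle_of_wle h hij' hw
    have h1 := lehmer_split (le_of_lt hij') hv
    have h2 := mext_le_of_leftWeak h i j.castSucc
    omega

lemma bmin_apply_self (w : Equiv.Perm (Fin n)) (i : Fin n) (x : ℕ) : bmin w i x i = x := by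
  simp [bmin, mext_self]

lemma bmin_apply_zero (w : Equiv.Perm (Fin n)) {i j : Fin n} (x : ℕ)
    (h : ¬((i : ℕ) ≤ (j : ℕ) ∧ (w i : ℕ) ≤ (w j : ℕ))) : bmin w i x j = 0 := by
  simp only [bmin]
  rw [if_neg h]

lemma bmin_mono (w : Equiv.Perm (Fin n)) (i : Fin n) {x y : ℕ} (h : x ≤ y) :
    bmin w i x ≤ bmin w i y := by
  intro j
  simp only [bmin]
  split
  · omega
  · exact le_refl 0

lemma bmin_inj {w : Equiv.Perm (Fin n)} {i i' : Fin n} {x x' : ℕ} (hx : 1 ≤ x) (hx' : 1 ≤ x')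
    (h : bmin w i x = bmin w i' x') : i = i' ∧ x = x' := by
  have hii' : i = i' := by
    by_contra hne
    rcases Fin.lt_or_lt_of_ne hne with hlt | hlt
    · have h1 : bmin w i x i = x := bmin_apply_self w i x
      have h2 : bmin w i' x' i = 0 := bmin_apply_zero w x' (by
        rw [Fin.lt_def] at hlt; omega)
      rw [h] at h1
      omega
    · have h1 : bmin w i' x' i' = x' := bmin_apply_self w i' x'
      have h2 : bmin w i x i' = 0 := bmin_apply_zero w x (by
        rw [Fin.lt_def] at hlt; omega)
      rw [h] at h2
      omega
  subst hii'
  refine ⟨rfl, ?_⟩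
  have h1 : bmin w i x i = x := bmin_apply_self w i x
  have h2 : bmin w i x' i = x' := bmin_apply_self w i x'
  rw [h] at h1
  omega

/-- Theorem A: for `v ≤_L w`, `b_{i,x}(w) ≤ code(v)` iff `x ≤ c_i(v)`. -/
lemma bmin_le_lehmer {v w : Equiv.Perm (Fin n)} (h : leftWeak v w) {i : Fin n} {x : ℕ}
    (hx : x ≤ lehmer v i) : bmin w i x ≤ lehmer v := by
  intro j
  simp only [bmin]
  split
  case isFalse => exact Nat.zero_le _
  case isTrue hcond =>
    obtain ⟨hij, hwij⟩ := hcond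
    have hij' : i ≤ j := by rw [Fin.le_def]; exact hij
    have hw : w i ≤ w j := by rw [Fin.le_def]; exact hwij
    have hv : v i ≤ v j := by
      rcases eq_or_lt_of_le hij' with rfl | hlt
      · exact le_refl _
      · exact vle_of_wle h hlt hw
    have h1 : lehmer v i ≤ mext v i j.castSucc + lehmer v j := lehmer_split hij' hv
    have h2 : mext v i j.castSucc ≤ mext w i j.castSucc := mext_le_of_leftWeak h i j.castSucc
    omega

/-- Core counting: if `(i,j)` is an inversion of `v` then
`c_i(v) ≥ m_{i,j}(v) + 1 + c_j(v)`. -/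
lemma lehmer_ge_of_inv {v : Equiv.Perm (Fin n)} {i j : Fin n} (hij : i < j) (hv : v j < v i) :
    mext v i j.castSucc + 1 + lehmer v j ≤ lehmer v i := by
  have hsub : (univ.filter fun k => i < k ∧ v k < v i ∧ (k : ℕ) < (j.castSucc : ℕ))
      ∪ insert j (univ.filter fun k => j < k ∧ v k < v j)
      ⊆ univ.filter fun k => i < k ∧ v k < v i := by
    intro k hk
    simp only [Finset.mem_union, Finset.mem_insert, mem_filter, mem_univ, true_and] at hk ⊢
    rcases hk with ⟨h1, h2, _⟩ | rfl | ⟨h1, h2⟩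
    · exact ⟨h1, h2⟩
    · exact ⟨hij, hv⟩
    · exact ⟨lt_trans hij h1, lt_trans h2 hv⟩
  have hj : j ∉ (univ.filter fun k => j < k ∧ v k < v j) := by
    simp
  have hdisj : Disjoint (univ.filter fun k => i < k ∧ v k < v i ∧ (k : ℕ) < (j.castSucc : ℕ))
      (insert j (univ.filter fun k => j < k ∧ v k < v j)) := by
    rw [Finset.disjoint_left]
    intro k hk hk'
    simp only [mem_filter, mem_univ, true_and, Fin.coe_castSucc] at hk
    simp only [Finset.mem_insert, mem_filter, mem_univ, true_and] at hk'
    rcases hk' with rfl | ⟨h1, _⟩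
    · omega
    · rw [Fin.lt_def] at h1; omega
  calc mext v i j.castSucc + 1 + lehmer v j
      = (univ.filter fun k => i < k ∧ v k < v i ∧ (k : ℕ) < (j.castSucc : ℕ)).card
        + (insert j (univ.filter fun k => j < k ∧ v k < v j)).card := by
        rw [Finset.card_insert_of_notMem hj, mext_eq, lehmer_eq]; ring
    _ = ((univ.filter fun k => i < k ∧ v k < v i ∧ (k : ℕ) < (j.castSucc : ℕ))
        ∪ insert j (univ.filter fun k => j < k ∧ v k < v j)).card :=
        (Finset.card_union_of_disjoint hdisj).symm
    _ ≤ (univ.filter fun k => i < k ∧ v k < v i).card := Finset.card_le_card hsub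
    _ = lehmer v i := (lehmer_eq v i).symm

/-- Sufficiency: the Good inequalities on the code force `inv v ⊆ inv w`. -/
lemma good_code_leftWeak {v w : Equiv.Perm (Fin n)}
    (h2 : ∀ i j : Fin n, i ≤ j → w i ≤ w j → lehmer v i ≤ lehmer v j + mext w i j.castSucc) :
    leftWeak v w := by
  have key : ∀ g : ℕ, ∀ i j : Fin n, (j : ℕ) - (i : ℕ) ≤ g → i < j → v j < v i → w j < w i := by
    intro g
    induction g with
    | zero => intro i j hg hij _; rw [Fin.lt_def] at hij; omega
    | succ g ih =>
      intro i j hg hij hv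
      by_contra hw
      push_neg at hw
      have hwij : w i < w j := by
        rcases lt_or_eq_of_le hw with h | h
        · exact h
        · exact absurd (w.injective h) (ne_of_lt hij)
      have hgood := h2 i j (le_of_lt hij) (le_of_lt hwij)
      have hbig := lehmer_ge_of_inv hij hv
      have hlt : mext v i j.castSucc < mext w i j.castSucc := by omega
      -- find k with i < k < j, w k < w i, ¬(v k < v i)
      have : ¬ ((univ.filter fun k => i < k ∧ w k < w i ∧ (k : ℕ) < (j.castSucc : ℕ))
          ⊆ univ.filter fun k => i < k ∧ v k < v i ∧ (k : ℕ) < (j.castSucc : ℕ)) := by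
        intro hsub
        have := Finset.card_le_card hsub
        rw [← mext_eq, ← mext_eq] at this
        omega
      obtain ⟨k, hk1, hk2⟩ := Finset.not_subset.1 this
      simp only [mem_filter, mem_univ, true_and, Fin.coe_castSucc, not_and, not_lt] at hk1 hk2
      obtain ⟨hik, hwk, hkj⟩ := hk1
      have hvk : v i ≤ v k := by
        refine le_of_not_gt (fun hh => ?_)
        have := hk2 hik hh
        omega
      have hkj' : k < j := by rw [Fin.lt_def]; exact hkj
      have hvjk : v j < v k := lt_of_lt_of_le hv hvk
      have hwjk := ih k j (by rw [Fin.lt_def] at hij hik; omega) hkj' hvjk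
      rw [Fin.lt_def] at hwjk hwk hwij
      omega
  intro p hp
  rw [mem_Invs] at hp ⊢
  exact ⟨hp.1, key n p.1 p.2 (by omega) hp.1 hp.2⟩

lemma val_eq_lehmer_add (v : Equiv.Perm (Fin n)) (i : Fin n) :
    (v i : ℕ) = (univ.filter fun t => t < i ∧ v t < v i).card + lehmer v i := by
  have h1 : (univ.filter fun t => v t < v i).card = (v i : ℕ) := by
    rw [perm_filter_card v (fun t => t < v i)]
    have : ((univ : Finset (Fin n)).filter fun t => t < v i)
        = (univ : Finset (Fin n)).filter fun t : Fin n => (t : ℕ) < ((v i : ℕ)) := by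
      ext t; simp only [mem_filter, mem_univ, true_and, Fin.lt_def]
    rw [this, card_filter_val (fun m => m < (v i : ℕ))]
    have : (Finset.range n).filter (fun m => m < (v i : ℕ)) = Finset.range (v i : ℕ) := by
      ext m
      simp only [mem_filter, Finset.mem_range]
      have := (v i).isLt
      omega
    rw [this, Finset.card_range]
  have h2 : (univ.filter fun t => v t < v i)
      = (univ.filter fun t => t < i ∧ v t < v i) ∪ (univ.filter fun t => i < t ∧ v t < v i) := by
    ext t
    simp only [mem_filter, mem_univ, true_and, Finset.mem_union]
    constructor
    · intro h
      have : t ≠ i := fun hh => absurd h (by rw [hh]; exact lt_irrefl _)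
      rcases lt_or_gt_of_ne this with hh | hh
      · exact Or.inl ⟨hh, h⟩
      · exact Or.inr ⟨hh, h⟩
    · rintro (⟨_, h⟩ | ⟨_, h⟩) <;> exact h
  have h3 : Disjoint ((univ : Finset (Fin n)).filter fun t => t < i ∧ v t < v i)
      (univ.filter fun t => i < t ∧ v t < v i) := by
    rw [Finset.disjoint_left]
    intro t ht ht'
    simp only [mem_filter, mem_univ, true_and] at ht ht'
    exact absurd (lt_trans ht.1 ht'.1) (lt_irrefl _)
  rw [← h1, h2, Finset.card_union_of_disjoint h3, lehmer_eq]

lemma lehmer_inj_aux {v v' : Equiv.Perm (Fin n)} (h : lehmer v = lehmer v') {i : Fin n}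
    (hpre : ∀ j : Fin n, (j : ℕ) < (i : ℕ) → v j = v' j) (hlt : (v i : ℕ) < (v' i : ℕ)) :
    False := by
  set a := (v i : ℕ) with ha
  set a' := (v' i : ℕ) with ha'
  have e1 := val_eq_lehmer_add v i
  have e2 := val_eq_lehmer_add v' i
  rw [h] at e1
  set L := lehmer v' i
  -- the prefix count for v' is bounded
  have hsub : ((univ : Finset (Fin n)).filter fun t => t < i ∧ v' t < v' i)
      ⊆ ((univ : Finset (Fin n)).filter fun t => t < i ∧ v t < v i)
        ∪ ((univ : Finset (Fin n)).filter fun t => a < (v t : ℕ) ∧ (v t : ℕ) < a') := by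
    intro t ht
    simp only [mem_filter, mem_univ, true_and, Finset.mem_union] at ht ⊢
    obtain ⟨hti, htv⟩ := ht
    have hvt : v t = v' t := hpre t (by rw [Fin.lt_def] at hti; exact hti)
    rcases lt_or_ge (v t : ℕ) a with hc | hc
    · exact Or.inl ⟨hti, by rw [Fin.lt_def]; exact hc⟩
    · have hne : (v t : ℕ) ≠ a := by
        intro hh
        exact absurd (v.injective (Fin.ext hh)) (ne_of_lt hti)
      refine Or.inr ⟨by omega, ?_⟩
      rw [hvt]
      rw [Fin.lt_def] at htv
      exact htv
  have hcard2 : ((univ : Finset (Fin n)).filter fun t => a < (v t : ℕ) ∧ (v t : ℕ) < a').card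
      = a' - a - 1 := by
    rw [perm_filter_card v (fun s => a < (s : ℕ) ∧ (s : ℕ) < a')]
    exact card_val_Ioo a a' (le_of_lt (v' i).isLt)
  have hle := le_trans (Finset.card_le_card hsub) (Finset.card_union_le _ _)
  rw [hcard2] at hle
  omega

lemma lehmer_injective {v v' : Equiv.Perm (Fin n)} (h : lehmer v = lehmer v') : v = v' := by
  have key : ∀ m : ℕ, ∀ i : Fin n, (i : ℕ) ≤ m → v i = v' i := by
    intro m
    induction m with
    | zero =>
      intro i hi
      rcases lt_trichotomy ((v i : ℕ)) ((v' i : ℕ)) with hc | hc | hc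
      · exact absurd (lehmer_inj_aux h (fun j hj => by omega) hc) not_false
      · exact Fin.ext hc
      · exact absurd (lehmer_inj_aux h.symm (fun j hj => by omega) hc) not_false
    | succ m ih =>
      intro i hi
      rcases Nat.lt_or_ge (i : ℕ) (m + 1) with hi' | hi'
      · exact ih i (by omega)
      · have hpre : ∀ j : Fin n, (j : ℕ) < (i : ℕ) → v j = v' j := by
          intro j hj
          exact ih j (by omega)
        rcases lt_trichotomy ((v i : ℕ)) ((v' i : ℕ)) with hc | hc | hc
        · exact absurd (lehmer_inj_aux h hpre hc) not_false
        · exact Fin.ext hc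
        · exact absurd (lehmer_inj_aux h.symm (fun j hj => (hpre j hj).symm) hc) not_false
  exact Equiv.ext (fun i => key n i (le_of_lt i.isLt))

lemma lehmer_surjective (c : Fin n → ℕ) (hc : ∀ i, c i + (i : ℕ) + 1 ≤ n) :
    ∃ v : Equiv.Perm (Fin n), lehmer v = c := by
  classical
  let F : Equiv.Perm (Fin n) → ((i : Fin n) → Fin (n - (i : ℕ))) :=
    fun v i => ⟨lehmer v i, by have := lehmer_add_lt v i; omega⟩
  have hinj : Function.Injective F := by
    intro v v' hvv'
    apply lehmer_injective
    funext i
    have := congrFun hvv' i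
    simpa [F, Fin.ext_iff] using this
  have hcard : Fintype.card (Equiv.Perm (Fin n))
      = Fintype.card ((i : Fin n) → Fin (n - (i : ℕ))) := by
    rw [Fintype.card_perm, Fintype.card_pi]
    simp only [Fintype.card_fin]
    rw [Fin.prod_univ_eq_prod_range (fun i => n - i) n]
    have h1 : ∀ j ∈ Finset.range n, n - (n - 1 - j) = j + 1 := by
      intro j hj
      rw [Finset.mem_range] at hj
      omega
    calc Nat.factorial n = ∏ j ∈ Finset.range n, (j + 1) := (Finset.prod_range_add_one_eq_factorial n).symm
      _ = ∏ j ∈ Finset.range n, (n - (n - 1 - j)) := (Finset.prod_congr rfl h1).symm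
      _ = ∏ j ∈ Finset.range n, (n - j) := Finset.prod_range_reflect (fun j => n - j) n
  have hbij : Function.Bijective F :=
    (Fintype.bijective_iff_injective_and_card F).2 ⟨hinj, hcard⟩
  obtain ⟨v, hv⟩ := hbij.2 (fun i => ⟨c i, by have := hc i; omega⟩)
  refine ⟨v, funext fun i => ?_⟩
  have := congrFun hv i
  simpa [F, Fin.ext_iff] using this

/-- Index finset for the multiset of `b`-vectors with multiplicities `c`. -/
def Tc {n : ℕ} (c : Fin n → ℕ) : Finset ((_ : Fin n) × ℕ) :=
  Finset.univ.sigma (fun i => Finset.Icc 1 (c i))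

def Bset {n : ℕ} (w : Equiv.Perm (Fin n)) (c : Fin n → ℕ) : Set (Fin n → ℕ) :=
  (fun p : (_ : Fin n) × ℕ => bmin w p.1 p.2) '' ↑(Tc c)

lemma mem_Tc {c : Fin n → ℕ} {p : (_ : Fin n) × ℕ} :
    p ∈ Tc c ↔ 1 ≤ p.2 ∧ p.2 ≤ c p.1 := by
  simp [Tc, Finset.mem_sigma, Finset.mem_Icc]

lemma Tc_card (c : Fin n → ℕ) : (Tc c).card = ∑ i, c i := by
  rw [Tc, Finset.card_sigma]
  congr 1
  funext i
  rw [Nat.card_Icc]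
  omega

lemma mem_Bset {w : Equiv.Perm (Fin n)} {c : Fin n → ℕ} {z : Fin n → ℕ} :
    z ∈ Bset w c ↔ ∃ (i : Fin n) (x : ℕ), 1 ≤ x ∧ x ≤ c i ∧ z = bmin w i x := by
  constructor
  · rintro ⟨p, hp, rfl⟩
    rw [Finset.mem_coe, mem_Tc] at hp
    exact ⟨p.1, p.2, hp.1, hp.2, rfl⟩
  · rintro ⟨i, x, h1, h2, rfl⟩
    exact ⟨⟨i, x⟩, by rw [Finset.mem_coe, mem_Tc]; exact ⟨h1, h2⟩, rfl⟩

lemma Mset_eq_Bset (w : Equiv.Perm (Fin n)) : Mset w = Bset w (lehmer w) := by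
  ext z
  rw [mem_Bset]
  rfl

lemma Bset_injOn (w : Equiv.Perm (Fin n)) (c : Fin n → ℕ) :
    Set.InjOn (fun p : (_ : Fin n) × ℕ => bmin w p.1 p.2) ↑(Tc c) := by
  rintro p hp q hq h
  rw [Finset.mem_coe, mem_Tc] at hp hq
  obtain ⟨h1, h2⟩ := bmin_inj hp.1 hq.1 h
  exact Sigma.ext h1 (heq_of_eq h2)

lemma ncard_Bset (w : Equiv.Perm (Fin n)) (c : Fin n → ℕ) :
    (Bset w c).ncard = ∑ i, c i := by
  rw [Bset, Set.ncard_image_of_injOn (Bset_injOn w c), Set.ncard_coe_finset, Tc_card]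

lemma Mset_finite (w : Equiv.Perm (Fin n)) : (Mset w).Finite := by
  rw [Mset_eq_Bset, Bset]
  exact (Finset.finite_toSet _).image _

lemma ncard_Mset (w : Equiv.Perm (Fin n)) : (Mset w).ncard = len w := by
  rw [Mset_eq_Bset, ncard_Bset, len_eq_sum]

lemma Bset_subset_Mset {w : Equiv.Perm (Fin n)} {c : Fin n → ℕ}
    (h : ∀ i, c i ≤ lehmer w i) : Bset w c ⊆ Mset w := by
  intro z hz
  rw [mem_Bset] at hz
  obtain ⟨i, x, h1, h2, rfl⟩ := hz
  exact ⟨i, x, h1, le_trans h2 (h i), rfl⟩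

/-- `S` is a down-set of the poset `M_w`. -/
def DownClosed {n : ℕ} (w : Equiv.Perm (Fin n)) (S : Set (Fin n → ℕ)) : Prop :=
  ∀ z' z : Fin n → ℕ, z' ∈ Mset w → z ∈ S → z' ≤ z → z' ∈ S

lemma Bset_downClosed {w : Equiv.Perm (Fin n)} {c : Fin n → ℕ} (hg : Good w c) :
    DownClosed w (Bset w c) := by
  intro z' z hz' hz hle
  obtain ⟨i', x', h1', h2', rfl⟩ := hz'
  rw [mem_Bset] at hz ⊢
  obtain ⟨i, x, h1, h2, rfl⟩ := hz
  have hle2 : bmin w i' x' ≤ bmin w i (c i) := le_trans hle (bmin_mono w i h2)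
  have key := hle2 i'
  rw [bmin_apply_self] at key
  by_cases hcond : (i : ℕ) ≤ (i' : ℕ) ∧ (w i : ℕ) ≤ (w i' : ℕ)
  · have hb : bmin w i (c i) i' = c i - mext w i i'.castSucc := by
      simp only [bmin]
      rw [if_pos hcond]
    rw [hb] at key
    have hgood := hg.2 i i' (by rw [Fin.le_def]; exact hcond.1) (by rw [Fin.le_def]; exact hcond.2)
    refine ⟨i', x', h1', ?_, rfl⟩
    exact le_trans key (Nat.sub_le_iff_le_add.mpr hgood)
  · rw [bmin_apply_zero w (c i) hcond] at key
    exact absurd (le_trans h1' key) (by norm_num)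

/-- A down-closed subset of `Icc 1 m` is an initial interval. -/
lemma downclosed_interval {F : Finset ℕ} {m : ℕ} (hsub : F ⊆ Finset.Icc 1 m)
    (hdc : ∀ x ∈ F, ∀ y : ℕ, 1 ≤ y → y ≤ x → y ∈ F) : F = Finset.Icc 1 F.card := by
  rcases F.eq_empty_or_nonempty with rfl | hne
  · simp
  have hmax := F.max'_mem hne
  have hF : F = Finset.Icc 1 (F.max' hne) := by
    ext y
    rw [Finset.mem_Icc]
    constructor
    · intro hy
      have := hsub hy
      rw [Finset.mem_Icc] at this
      exact ⟨this.1, F.le_max' y hy⟩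
    · intro hy
      exact hdc _ hmax y hy.1 hy.2
  rw [hF, Nat.card_Icc, Nat.add_sub_cancel]

lemma bmin_chain {w : Equiv.Perm (Fin n)} {i j : Fin n} (hij : i ≤ j) (hw : w i ≤ w j)
    (y : ℕ) : bmin w j (y - mext w i j.castSucc) ≤ bmin w i y := by
  intro t
  simp only [bmin]
  split
  case isFalse => exact Nat.zero_le _
  case isTrue hcond =>
    obtain ⟨hjt, hwjt⟩ := hcond
    have hcond' : (i : ℕ) ≤ (t : ℕ) ∧ (w i : ℕ) ≤ (w t : ℕ) := by
      rw [Fin.le_def] at hij hw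
      omega
    rw [if_pos hcond']
    have htri := mext_triangle hij hw t.castSucc
    omega

lemma good_of_downClosed {w : Equiv.Perm (Fin n)} {S : Set (Fin n → ℕ)}
    (hS : S ⊆ Mset w) (hdc : DownClosed w S) :
    ∃ c : Fin n → ℕ, Good w c ∧ S = Bset w c := by
  classical
  set Fi : Fin n → Finset ℕ :=
    fun i => (Finset.Icc 1 (lehmer w i)).filter (fun x => bmin w i x ∈ S) with hFi_def
  set c : Fin n → ℕ := fun i => (Fi i).card with hc_def
  have hFi : ∀ i, Fi i = Finset.Icc 1 (c i) := by
    intro i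
    apply downclosed_interval (Finset.filter_subset _ _)
    intro x hx y h1y hyx
    rw [Finset.mem_filter, Finset.mem_Icc] at hx ⊢
    refine ⟨⟨h1y, le_trans hyx hx.1.2⟩, ?_⟩
    refine hdc _ _ ⟨i, y, h1y, le_trans hyx hx.1.2, rfl⟩ hx.2 (bmin_mono w i hyx)
  have hc_le : ∀ i, c i ≤ lehmer w i := by
    intro i
    simp only [hc_def]
    calc (Fi i).card ≤ (Finset.Icc 1 (lehmer w i)).card :=
          Finset.card_le_card (Finset.filter_subset _ _)
      _ = lehmer w i := by rw [Nat.card_Icc]; omega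
  have hmem : ∀ i x, (bmin w i x ∈ S ∧ 1 ≤ x ∧ x ≤ lehmer w i) ↔ (1 ≤ x ∧ x ≤ c i) := by
    intro i x
    constructor
    · intro ⟨h1, h2, h3⟩
      have : x ∈ Fi i := by
        simp only [hFi_def, Finset.mem_filter, Finset.mem_Icc]
        exact ⟨⟨h2, h3⟩, h1⟩
      rw [hFi i, Finset.mem_Icc] at this
      exact this
    · intro ⟨h1, h2⟩
      have : x ∈ Fi i := by rw [hFi i, Finset.mem_Icc]; exact ⟨h1, h2⟩
      simp only [hFi_def, Finset.mem_filter, Finset.mem_Icc] at this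
      exact ⟨this.2, this.1.1, this.1.2⟩
  have hSB : S = Bset w c := by
    ext z
    constructor
    · intro hz
      obtain ⟨i, x, h1, h2, rfl⟩ := hS hz
      rw [mem_Bset]
      exact ⟨i, x, ((hmem i x).1 ⟨hz, h1, h2⟩).1, ((hmem i x).1 ⟨hz, h1, h2⟩).2, rfl⟩
    · intro hz
      rw [mem_Bset] at hz
      obtain ⟨i, x, h1, h2, rfl⟩ := hz
      exact ((hmem i x).2 ⟨h1, h2⟩).1
  refine ⟨c, ⟨hc_le, ?_⟩, hSB⟩
  intro i j hij hw
  by_cases hci : c i = 0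
  · omega
  set x := c i - mext w i j.castSucc with hx_def
  by_cases hx0 : x = 0
  · omega
  have h1x : 1 ≤ x := by omega
  have hbi : bmin w i (c i) ≤ lehmer w := bmin_le_lehmer (le_refl (Invs w)) (hc_le i)
  have hx_le : x ≤ lehmer w j := by
    have := hbi j
    have hcond : (i : ℕ) ≤ (j : ℕ) ∧ (w i : ℕ) ≤ (w j : ℕ) := by
      rw [Fin.le_def] at hij hw
      exact ⟨hij, hw⟩
    simp only [bmin] at this
    rw [if_pos hcond] at this
    omega
  have hbiS : bmin w i (c i) ∈ S := ((hmem i (c i)).2 ⟨by omega, le_refl _⟩).1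
  have hchain : bmin w j x ≤ bmin w i (c i) := bmin_chain hij hw (c i)
  have hjx : bmin w j x ∈ S :=
    hdc _ _ ⟨j, x, h1x, hx_le, rfl⟩ hbiS hchain
  have := ((hmem j x).1 ⟨hjx, h1x, hx_le⟩).2
  omega

section Duality

variable {w : Equiv.Perm (Fin n)} {f g : (Fin n → ℕ) → (Fin n → ℕ)}

/-- Generic complement identity for a pair of mutually inverse self-maps of `M_w`. -/
lemma compl_image (hfm : ∀ z ∈ Mset w, f z ∈ Mset w) (hgm : ∀ z ∈ Mset w, g z ∈ Mset w)
    (hgf : ∀ z ∈ Mset w, g (f z) = z) (hfg : ∀ z ∈ Mset w, f (g z) = z)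
    {S : Set (Fin n → ℕ)} (hS : S ⊆ Mset w) :
    Mset w \ (f '' (Mset w \ S)) = f '' S := by
  ext z
  constructor
  · rintro ⟨hzM, hz⟩
    by_cases hgz : g z ∈ S
    · exact ⟨g z, hgz, hfg z hzM⟩
    · exact absurd ⟨g z, ⟨hgm z hzM, hgz⟩, hfg z hzM⟩ hz
  · rintro ⟨s, hs, rfl⟩
    refine ⟨hfm s (hS hs), ?_⟩
    rintro ⟨u, hu, huf⟩
    have : u = s := by
      have h1 := hgf u hu.1
      have h2 := hgf s (hS hs)
      rw [huf] at h1
      rw [h1] at h2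
      exact h2.symm ▸ rfl
    rw [this] at hu
    exact hu.2 hs

lemma image_comp_id {S : Set (Fin n → ℕ)} (hS : S ⊆ Mset w)
    (hgf : ∀ z ∈ Mset w, g (f z) = z) : g '' (f '' S) = S := by
  ext z
  constructor
  · rintro ⟨y, ⟨s, hs, rfl⟩, rfl⟩
    rw [hgf s (hS hs)]
    exact hs
  · intro hz
    exact ⟨f z, ⟨z, hz, rfl⟩, hgf z (hS hz)⟩

/-- Applying the duality to a down-set. -/
lemma dual_downset (hfm : ∀ z ∈ Mset w, f z ∈ Mset w) (hgm : ∀ z ∈ Mset w, g z ∈ Mset w)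
    (hgf : ∀ z ∈ Mset w, g (f z) = z) (hfg : ∀ z ∈ Mset w, f (g z) = z)
    (hanti : ∀ z ∈ Mset w, ∀ z' ∈ Mset w, z ≤ z' ↔ f z' ≤ f z)
    {S : Set (Fin n → ℕ)} (hS : S ⊆ Mset w) (hdc : DownClosed w S) :
    (f '' (Mset w \ S)) ⊆ Mset w ∧ DownClosed w (f '' (Mset w \ S)) ∧
      (f '' (Mset w \ S)).ncard = (Mset w).ncard - S.ncard := by
  have hinj : Set.InjOn f (Mset w) := by
    intro a ha b hb hab
    have h1 := hgf a ha
    have h2 := hgf b hb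
    rw [hab] at h1
    rw [h1] at h2
    exact h2
  refine ⟨?_, ?_, ?_⟩
  · rintro z ⟨u, hu, rfl⟩
    exact hfm u hu.1
  · rintro z' z hz'M ⟨u, hu, rfl⟩ hle
    refine ⟨g z', ⟨hgm z' hz'M, ?_⟩, hfg z' hz'M⟩
    intro hgzS
    have hle2 : u ≤ g z' := by
      have := (hanti u hu.1 (g z') (hgm z' hz'M)).2
      rw [hfg z' hz'M] at this
      exact this hle
    exact hu.2 (hdc u (g z') hu.1 hgzS hle2)
  · rw [Set.ncard_image_of_injOn (hinj.mono Set.diff_subset),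
      Set.ncard_diff hS ((Mset_finite w).subset hS)]

end Duality

def GoodK {n : ℕ} (w : Equiv.Perm (Fin n)) (k : ℕ) : Set (Fin n → ℕ) :=
  {c | Good w c ∧ ∑ i, c i = k}

def DownK {n : ℕ} (w : Equiv.Perm (Fin n)) (k : ℕ) : Set (Set (Fin n → ℕ)) :=
  {S | S ⊆ Mset w ∧ DownClosed w S ∧ S.ncard = k}

lemma ncard_level_eq_GoodK (w : Equiv.Perm (Fin n)) (k : ℕ) :
    {v : Equiv.Perm (Fin n) | leftWeak v w ∧ len v = k}.ncard = (GoodK w k).ncard := by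
  have him : lehmer '' {v : Equiv.Perm (Fin n) | leftWeak v w ∧ len v = k} = GoodK w k := by
    ext c
    constructor
    · rintro ⟨v, ⟨hv, hlen⟩, rfl⟩
      exact ⟨code_good hv, by rw [← len_eq_sum]; exact hlen⟩
    · rintro ⟨hg, hsum⟩
      have hb : ∀ i, c i + (i : ℕ) + 1 ≤ n := by
        intro i
        have h1 := hg.1 i
        have h2 := lehmer_add_lt w i
        omega
      obtain ⟨v, rfl⟩ := lehmer_surjective c hb
      refine ⟨v, ⟨?_, by rw [len_eq_sum]; exact hsum⟩, rfl⟩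
      exact good_code_leftWeak (fun i j hij hw => hg.2 i j hij hw)
  rw [← him]
  rw [Set.ncard_image_of_injOn (fun a _ b _ h => lehmer_injective h)]

lemma Bset_mono_of_eq {w : Equiv.Perm (Fin n)} {c c' : Fin n → ℕ}
    (h : Bset w c = Bset w c') (i : Fin n) : c i ≤ c' i := by
  by_cases hci : c i = 0
  · omega
  have hmem : bmin w i (c i) ∈ Bset w c := mem_Bset.2 ⟨i, c i, by omega, le_refl _, rfl⟩
  rw [h, mem_Bset] at hmem
  obtain ⟨i', x', h1', h2', heq⟩ := hmem
  obtain ⟨rfl, hx⟩ := bmin_inj (by omega) h1' heq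
  omega

lemma ncard_GoodK_eq_DownK (w : Equiv.Perm (Fin n)) (k : ℕ) :
    (GoodK w k).ncard = (DownK w k).ncard := by
  have him : (Bset w) '' GoodK w k = DownK w k := by
    ext S
    constructor
    · rintro ⟨c, ⟨hg, hsum⟩, rfl⟩
      exact ⟨Bset_subset_Mset hg.1, Bset_downClosed hg, by rw [ncard_Bset]; exact hsum⟩
    · rintro ⟨hsub, hdc, hcard⟩
      obtain ⟨c, hg, rfl⟩ := good_of_downClosed hsub hdc
      refine ⟨c, ⟨hg, ?_⟩, rfl⟩
      rw [← ncard_Bset w c]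
      exact hcard
  rw [← him]
  rw [Set.ncard_image_of_injOn ?_]
  intro c _ c' _ h
  funext i
  exact le_antisymm (Bset_mono_of_eq h i) (Bset_mono_of_eq h.symm i)

lemma ncard_DownK_symm (w : Equiv.Perm (Fin n))
    (hsd : ∃ φ : Mset w ≃ Mset w,
      ∀ z z' : Mset w, (z : Fin n → ℕ) ≤ (z' : Fin n → ℕ) ↔
        (φ z' : Fin n → ℕ) ≤ (φ z : Fin n → ℕ))
    {k : ℕ} (hk : k ≤ len w) :
    (DownK w k).ncard = (DownK w (len w - k)).ncard := by
  classical
  obtain ⟨φ, hφ⟩ := hsd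
  set f : (Fin n → ℕ) → (Fin n → ℕ) :=
    fun z => if h : z ∈ Mset w then (φ ⟨z, h⟩ : Fin n → ℕ) else z with hf_def
  set g : (Fin n → ℕ) → (Fin n → ℕ) :=
    fun z => if h : z ∈ Mset w then (φ.symm ⟨z, h⟩ : Fin n → ℕ) else z with hg_def
  have hfm : ∀ z ∈ Mset w, f z ∈ Mset w := by
    intro z hz
    simp only [hf_def, dif_pos hz]
    exact (φ ⟨z, hz⟩).2
  have hgm : ∀ z ∈ Mset w, g z ∈ Mset w := by
    intro z hz
    simp only [hg_def, dif_pos hz]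
    exact (φ.symm ⟨z, hz⟩).2
  have hgf : ∀ z ∈ Mset w, g (f z) = z := by
    intro z hz
    simp only [hf_def, hg_def, dif_pos hz, dif_pos (φ ⟨z, hz⟩).2]
    have : (⟨(φ ⟨z, hz⟩ : Fin n → ℕ), (φ ⟨z, hz⟩).2⟩ : Mset w) = φ ⟨z, hz⟩ := rfl
    rw [this, Equiv.symm_apply_apply]
  have hfg : ∀ z ∈ Mset w, f (g z) = z := by
    intro z hz
    simp only [hf_def, hg_def, dif_pos hz, dif_pos (φ.symm ⟨z, hz⟩).2]
    have : (⟨(φ.symm ⟨z, hz⟩ : Fin n → ℕ), (φ.symm ⟨z, hz⟩).2⟩ : Mset w) = φ.symm ⟨z, hz⟩ := rfl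
    rw [this, Equiv.apply_symm_apply]
  have hanti : ∀ z ∈ Mset w, ∀ z' ∈ Mset w, z ≤ z' ↔ f z' ≤ f z := by
    intro z hz z' hz'
    simp only [hf_def, dif_pos hz, dif_pos hz']
    exact hφ ⟨z, hz⟩ ⟨z', hz'⟩
  have hanti' : ∀ z ∈ Mset w, ∀ z' ∈ Mset w, z ≤ z' ↔ g z' ≤ g z := by
    intro z hz z' hz'
    have h1 := hanti (g z') (hgm z' hz') (g z) (hgm z hz)
    rw [hfg z hz, hfg z' hz'] at h1
    exact (h1.symm)
  have hMcard : (Mset w).ncard = len w := ncard_Mset w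
  have hmaps : ∀ {m m' : ℕ}, m + m' = len w → ∀ S ∈ DownK w m,
      (fun S => f '' (Mset w \ S)) S ∈ DownK w m' := by
    intro m m' hmm S hS
    obtain ⟨hsub, hdc, hcard⟩ := hS
    obtain ⟨h1, h2, h3⟩ := dual_downset hfm hgm hgf hfg hanti hsub hdc
    exact ⟨h1, h2, by rw [h3, hMcard, hcard]; omega⟩
  have hmaps' : ∀ {m m' : ℕ}, m + m' = len w → ∀ S ∈ DownK w m,
      (fun S => g '' (Mset w \ S)) S ∈ DownK w m' := by
    intro m m' hmm S hS
    obtain ⟨hsub, hdc, hcard⟩ := hS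
    obtain ⟨h1, h2, h3⟩ := dual_downset hgm hfm hfg hgf hanti' hsub hdc
    exact ⟨h1, h2, by rw [h3, hMcard, hcard]; omega⟩
  have hGF : ∀ S, S ⊆ Mset w → g '' (Mset w \ (f '' (Mset w \ S))) = S := by
    intro S hS
    rw [compl_image hfm hgm hgf hfg hS, image_comp_id hS hgf]
  have hFG : ∀ S, S ⊆ Mset w → f '' (Mset w \ (g '' (Mset w \ S))) = S := by
    intro S hS
    rw [compl_image hgm hfm hfg hgf hS, image_comp_id hS hfg]
  have him : (fun S => f '' (Mset w \ S)) '' DownK w k = DownK w (len w - k) := by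
    ext S
    constructor
    · rintro ⟨S', hS', rfl⟩
      exact hmaps (by omega) S' hS'
    · intro hS
      refine ⟨g '' (Mset w \ S), hmaps' (by omega) S hS, hFG S hS.1⟩
  rw [← him]
  rw [Set.ncard_image_of_injOn ?_]
  intro S hS S' hS' h
  simp only at h
  have h1 := hGF S hS.1
  have h2 := hGF S' hS'.1
  rw [h] at h1
  rw [h1] at h2
  exact h2

lemma len_le_of_leftWeak {v w : Equiv.Perm (Fin n)} (h : leftWeak v w) : len v ≤ len w :=
  Finset.card_le_card h

theorem selfDual_rank_symmetric' {n : ℕ} (w : Equiv.Perm (Fin n))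
    (hsd : ∃ φ : Mset w ≃ Mset w,
      ∀ z z' : Mset w, (z : Fin n → ℕ) ≤ (z' : Fin n → ℕ) ↔
        (φ z' : Fin n → ℕ) ≤ (φ z : Fin n → ℕ)) :
    ∀ k : ℕ,
      {v : Equiv.Perm (Fin n) | leftWeak v w ∧ len v = k}.ncard =
      {v : Equiv.Perm (Fin n) | leftWeak v w ∧ len v + k = len w}.ncard := by
  intro k
  by_cases hk : k ≤ len w
  · have hR : {v : Equiv.Perm (Fin n) | leftWeak v w ∧ len v + k = len w}
        = {v : Equiv.Perm (Fin n) | leftWeak v w ∧ len v = len w - k} := by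
      ext v
      simp only [Set.mem_setOf_eq]
      constructor
      · rintro ⟨h1, h2⟩
        exact ⟨h1, by omega⟩
      · rintro ⟨h1, h2⟩
        exact ⟨h1, by omega⟩
    rw [hR, ncard_level_eq_GoodK w k, ncard_level_eq_GoodK w (len w - k),
      ncard_GoodK_eq_DownK w k, ncard_GoodK_eq_DownK w (len w - k)]
    exact ncard_DownK_symm w hsd hk
  · have hL : {v : Equiv.Perm (Fin n) | leftWeak v w ∧ len v = k} = ∅ := by
      ext v
      simp only [Set.mem_setOf_eq, Set.mem_empty_iff_false, iff_false, not_and]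
      intro hv hlen
      have := len_le_of_leftWeak hv
      omega
    have hR : {v : Equiv.Perm (Fin n) | leftWeak v w ∧ len v + k = len w} = ∅ := by
      ext v
      simp only [Set.mem_setOf_eq, Set.mem_empty_iff_false, iff_false, not_and]
      intro hv hlen
      omega
    rw [hL, hR]

end RankSymmetryProof

/-- Proposition 5.1: if the poset `M_w` (a subposet of `ℕ^n` under the product order)
is self-dual, i.e. there is a bijection `φ : M_w → M_w` with `z ≤ z'` iff
`φ z' ≤ φ z`, then the weak order interval `Λ_w` is rank-symmetric: for every `k`,
the number of `v ≤_L w` of length `k` equals the number of `v ≤_L w` of length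
`ℓ(w) − k`. -/
theorem selfDual_rank_symmetric {n : ℕ} (w : Equiv.Perm (Fin n))
    (hsd : ∃ φ : Mset w ≃ Mset w,
      ∀ z z' : Mset w, (z : Fin n → ℕ) ≤ (z' : Fin n → ℕ) ↔
        (φ z' : Fin n → ℕ) ≤ (φ z : Fin n → ℕ)) :
    ∀ k : ℕ,
      {v : Equiv.Perm (Fin n) | leftWeak v w ∧ len v = k}.ncard =
      {v : Equiv.Perm (Fin n) | leftWeak v w ∧ len v + k = len w}.ncard := by
  exact selfDual_rank_symmetric' w hsd
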